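/- arXiv:1504.04099 — 4 statements merged into one kernel-verified Lean document; each statement's English description precedes it below -/
import Mathlib

section
/- Let n ≥ 1, s ∈ (0,1), λ > 0, and let K be a Lévy kernel on ℝⁿ with K(y) ≥ λ|y|^{−n−2s} for almost every y ≠ 0. Let Ω ⊂ ℝⁿ be a bounded open set. Then there is a constant C, depending only on n, s, λ, and the Lebesgue measure of Ω, such that for every u ∈ L²(ℝⁿ) with u = 0 almost everywhere in ℝⁿ∖Ω one has ∫_Ω u² dx ≤ C ∫_{ℝⁿ} ∫_{ℝⁿ} (u(x) − u(x+y))² K(y) dy dx (where the right-hand side may be infinite, in which case the inequality is trivial). -/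
open MeasureTheory Metric Set
open scoped ENNReal

noncomputable section

abbrev Ev (n : ℕ) := EuclideanSpace ℝ (Fin n)

/-- A Lévy kernel on `ℝⁿ`. -/
def IsLevyKernel {n : ℕ} (K : Ev n → ℝ) : Prop :=
  Measurable K ∧ (∀ y, 0 ≤ K y) ∧ (∀ y, K (-y) = K y) ∧
    Integrable (fun y => min (‖y‖ ^ 2) 1 * K y)

/-- fractional Poincaré inequality.  If `K(y) ≥ λ|y|^{-n-2s}` a.e., then for
some constant `C` depending only on `n`, `s`, `λ` and the measure of `Ω`, every
`u ∈ L²(ℝⁿ)` vanishing a.e. outside the bounded open set `Ω` satisfies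
`∫_Ω u² ≤ C ∫∫ (u(x)-u(x+y))² K(y) dy dx` (inequality in `[0,∞]`, so the right-hand side
may be infinite). -/
theorem statement1 (n : ℕ) (hn : 1 ≤ n) (s lam : ℝ) (hs : s ∈ Set.Ioo (0:ℝ) 1)
    (hlam : 0 < lam) (V : ℝ≥0∞) :
    ∃ C : ℝ, 0 < C ∧
      ∀ K : Ev n → ℝ, IsLevyKernel K →
        (∀ᵐ y : Ev n, y ≠ 0 → lam * ‖y‖ ^ (-(n:ℝ) - 2*s) ≤ K y) →
      ∀ Ω : Set (Ev n), IsOpen Ω → Bornology.IsBounded Ω → volume Ω = V →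
      ∀ u : Ev n → ℝ, MemLp u 2 volume → (∀ᵐ x : Ev n, x ∉ Ω → u x = 0) →
        ENNReal.ofReal (∫ x in Ω, (u x) ^ 2) ≤
          ENNReal.ofReal C *
            ∫⁻ x : Ev n, ∫⁻ y : Ev n, ENNReal.ofReal ((u x - u (x + y)) ^ 2 * K y) := by
  classical
  rcases eq_or_ne V 0 with hV0 | hV0
  · refine ⟨1, one_pos, ?_⟩
    intro K _ _ Ω _ _ hΩV u _ _
    rw [Measure.restrict_eq_zero.mpr (hΩV.trans hV0), integral_zero_measure]
    simp
  rcases eq_or_ne V ⊤ with hVt | hVt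
  · refine ⟨1, one_pos, ?_⟩
    intro K _ _ Ω _ hΩb hΩV
    exact absurd (hΩV ▸ hΩb.measure_lt_top) (by simp [hVt])
  -- main case
  haveI : Nontrivial (Ev n) := by
    refine ⟨EuclideanSpace.single ⟨0, hn⟩ (1:ℝ), 0, ?_⟩
    intro h
    have := congrArg (fun f : Ev n => f ⟨0, hn⟩) h
    simpa using this
  have hnR : (0:ℝ) < n := by exact_mod_cast hn
  set Vr : ℝ := V.toReal with hVr
  have hVrpos : 0 < Vr := ENNReal.toReal_pos hV0 hVt
  set c : ℝ := (volume (ball (0:Ev n) 1)).toReal with hc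
  have hcpos : 0 < c :=
    ENNReal.toReal_pos (measure_ball_pos volume _ one_pos).ne' measure_ball_lt_top.ne
  set R : ℝ := (2 * Vr / c) ^ ((n:ℝ)⁻¹) with hR
  have hRpos : 0 < R := Real.rpow_pos_of_pos (by positivity) _
  set e : ℝ := -(n:ℝ) - 2 * s with he
  have hepos : e < 0 := by
    have := hs.1
    simp only [he]
    nlinarith
  set κ : ℝ := lam * R ^ e with hκ
  have hκpos : 0 < κ := mul_pos hlam (Real.rpow_pos_of_pos hRpos _)
  refine ⟨(κ * Vr)⁻¹, by positivity, ?_⟩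
  intro K hK hKlow Ω hΩo hΩb hΩV u hu hu0
  have hfr : Module.finrank ℝ (Ev n) = n := by simp
  have hballR : volume (ball (0:Ev n) R) = 2 * V := by
    rw [Measure.addHaar_ball_of_pos volume (0:Ev n) hRpos, hfr]
    have hRn : R ^ n = 2 * Vr / c := by
      rw [hR, ← Real.rpow_natCast ((2 * Vr / c) ^ ((n:ℝ)⁻¹)) n, ← Real.rpow_mul (by positivity),
        inv_mul_cancel₀ hnR.ne', Real.rpow_one]
    have hcball : volume (ball (0:Ev n) 1) = ENNReal.ofReal c :=
      (ENNReal.ofReal_toReal measure_ball_lt_top.ne).symm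
    rw [hRn, hcball, ← ENNReal.ofReal_mul (by positivity), div_mul_cancel₀ _ hcpos.ne',
      ENNReal.ofReal_mul (by norm_num), ENNReal.ofReal_ofNat, hVr, ENNReal.ofReal_toReal hVt]
  have hne0 : ∀ᵐ y : Ev n, y ≠ (0 : Ev n) := by
    rw [ae_iff]
    simpa using measure_singleton (0 : Ev n)
  have key : ∀ x : Ev n,
      V * ENNReal.ofReal κ * ENNReal.ofReal (u x ^ 2) ≤
        ∫⁻ y : Ev n, ENNReal.ofReal ((u x - u (x + y)) ^ 2 * K y) := by
    intro x
    set S : Set (Ev n) := ball (0:Ev n) R \ {y | x + y ∈ Ω} with hS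
    have hSmeas : MeasurableSet S :=
      measurableSet_ball.diff (hΩo.measurableSet.preimage (measurable_const_add x))
    have hSvol : V ≤ volume S := by
      have h1 : volume {y : Ev n | x + y ∈ Ω} = V := by
        rw [← hΩV]; exact measure_preimage_add volume x Ω
      have h2 : volume (ball (0:Ev n) R) ≤ volume S + volume {y : Ev n | x + y ∈ Ω} := by
        refine (measure_mono ?_).trans (measure_union_le _ _)
        intro y hy
        by_cases h : x + y ∈ Ω
        · exact Or.inr h
        · exact Or.inl ⟨hy, h⟩
      rw [hballR, h1, two_mul] at h2
      exact (ENNReal.add_le_add_iff_right hVt).mp h2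
    calc V * ENNReal.ofReal κ * ENNReal.ofReal (u x ^ 2)
        ≤ volume S * ENNReal.ofReal (u x ^ 2 * κ) := by
          rw [ENNReal.ofReal_mul (sq_nonneg _)]
          calc V * ENNReal.ofReal κ * ENNReal.ofReal (u x ^ 2)
              ≤ volume S * ENNReal.ofReal κ * ENNReal.ofReal (u x ^ 2) := by
                exact mul_le_mul_left (mul_le_mul_left hSvol _) _
            _ = volume S * (ENNReal.ofReal (u x ^ 2) * ENNReal.ofReal κ) := by ring
      _ = ∫⁻ y in S, ENNReal.ofReal (u x ^ 2 * κ) := by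
          rw [setLIntegral_const, mul_comm]
      _ ≤ ∫⁻ y in S, ENNReal.ofReal ((u x - u (x + y)) ^ 2 * K y) := by
          apply lintegral_mono_ae
          have hN : ∀ᵐ y : Ev n, x + y ∉ Ω → u (x + y) = 0 := by
            rw [ae_iff] at hu0 ⊢
            have hpre : {y : Ev n | ¬ (x + y ∉ Ω → u (x + y) = 0)} =
                (fun y : Ev n => x + y) ⁻¹' {z : Ev n | ¬ (z ∉ Ω → u z = 0)} := rfl
            rw [hpre, measure_preimage_add]
            exact hu0
          filter_upwards [ae_restrict_mem hSmeas, ae_restrict_of_ae hN,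
            ae_restrict_of_ae hKlow, ae_restrict_of_ae hne0] with y hyS hyN hyK hy0
          have hxy : u (x + y) = 0 := hyN hyS.2
          rw [hxy, sub_zero]
          apply ENNReal.ofReal_le_ofReal
          apply mul_le_mul_of_nonneg_left _ (sq_nonneg _)
          have hKy := hyK hy0
          have hnorm : 0 < ‖y‖ := norm_pos_iff.mpr hy0
          have hle : ‖y‖ ≤ R := le_of_lt (by simpa using hyS.1)
          have hre : R ^ e ≤ ‖y‖ ^ e := Real.rpow_le_rpow_of_nonpos hnorm hle hepos.le
          calc κ = lam * R ^ e := rfl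
            _ ≤ lam * ‖y‖ ^ e := by nlinarith
            _ ≤ K y := hKy
      _ ≤ ∫⁻ y : Ev n, ENNReal.ofReal ((u x - u (x + y)) ^ 2 * K y) :=
          setLIntegral_le_lintegral _ _
  -- put things together
  have hI : ENNReal.ofReal (∫ x in Ω, u x ^ 2) ≤ ∫⁻ x, ENNReal.ofReal (u x ^ 2) := by
    refine (ofReal_integral_eq_lintegral_ofReal (hu.integrable_sq.restrict)
      (Filter.Eventually.of_forall fun x => sq_nonneg _)).le.trans ?_
    exact setLIntegral_le_lintegral _ _
  have hconst : (V * ENNReal.ofReal κ) ≠ ⊤ := by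
    exact ENNReal.mul_ne_top hVt ENNReal.ofReal_ne_top
  have hmid : V * ENNReal.ofReal κ * ∫⁻ x, ENNReal.ofReal (u x ^ 2) ≤
      ∫⁻ x : Ev n, ∫⁻ y : Ev n, ENNReal.ofReal ((u x - u (x + y)) ^ 2 * K y) := by
    rw [← lintegral_const_mul' _ _ hconst]
    exact lintegral_mono key
  have hone : ENNReal.ofReal ((κ * Vr)⁻¹) * (V * ENNReal.ofReal κ) = 1 := by
    have hV' : V = ENNReal.ofReal Vr := (ENNReal.ofReal_toReal hVt).symm
    rw [hV', ← ENNReal.ofReal_mul hVrpos.le, ← ENNReal.ofReal_mul (by positivity),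
      ← mul_assoc]
    rw [show (κ * Vr)⁻¹ * Vr * κ = 1 by field_simp]
    simp
  calc ENNReal.ofReal (∫ x in Ω, u x ^ 2)
      ≤ ∫⁻ x, ENNReal.ofReal (u x ^ 2) := hI
    _ = ENNReal.ofReal ((κ * Vr)⁻¹) *
        (V * ENNReal.ofReal κ * ∫⁻ x, ENNReal.ofReal (u x ^ 2)) := by
        rw [← mul_assoc, hone, one_mul]
    _ ≤ ENNReal.ofReal ((κ * Vr)⁻¹) *
        ∫⁻ x : Ev n, ∫⁻ y : Ev n, ENNReal.ofReal ((u x - u (x + y)) ^ 2 * K y) :=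
        mul_le_mul_right hmid _
end
end

section
/- Let K be a Lévy kernel on ℝⁿ with K(y) > 0 for almost every y, let Ω ⊂ ℝⁿ be a bounded open set, f ∈ L^∞(Ω), and let g be a measurable function on ℝⁿ∖Ω. Let u be an energy weak solution of Lu = f in Ω with u = g in ℝⁿ∖Ω. If f ≥ 0 almost everywhere in Ω and g ≥ 0 almost everywhere in ℝⁿ∖Ω, then u ≥ 0 almost everywhere in Ω. -/
open MeasureTheory Metric Set
open scoped ENNReal

noncomputable section

/-- The region `(ℝⁿ×ℝⁿ) ∖ (Ωᶜ×Ωᶜ)`. -/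
def crossRegion {n : ℕ} (Ω : Set (Ev n)) : Set (Ev n × Ev n) := {p | p.1 ∈ Ω ∨ p.2 ∈ Ω}

/-- The energy `E_Ω(φ) = ∬_{(ℝⁿ×ℝⁿ)∖(Ωᶜ×Ωᶜ)} (φ(x)-φ(z))² K(x-z) dx dz`, in `[0,∞]`. -/
def energyE {n : ℕ} (K : Ev n → ℝ) (Ω : Set (Ev n)) (φ : Ev n → ℝ) : ℝ≥0∞ :=
  ∫⁻ p in crossRegion Ω, ENNReal.ofReal ((φ p.1 - φ p.2) ^ 2 * K (p.1 - p.2))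

/-- A test function for `(Ω, K)`: in `L²(ℝⁿ)`, vanishing a.e. outside `Ω`, finite energy. -/
def IsTestFn {n : ℕ} (K : Ev n → ℝ) (Ω : Set (Ev n)) (φ : Ev n → ℝ) : Prop :=
  Measurable φ ∧ MemLp φ 2 volume ∧ (∀ᵐ x : Ev n, x ∉ Ω → φ x = 0) ∧ energyE K Ω φ < ⊤

/-- An energy weak solution of `Lu = f` in `Ω` with `u = g` in `ℝⁿ∖Ω`. -/
def IsEnergyWeakSol {n : ℕ} (K : Ev n → ℝ) (Ω : Set (Ev n)) (f g : Ev n → ℝ)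
    (u : Ev n → ℝ) : Prop :=
  Measurable u ∧ MemLp u 2 (volume.restrict Ω) ∧ (∀ᵐ x : Ev n, x ∉ Ω → u x = g x) ∧
    energyE K Ω u < ⊤ ∧
    ∀ φ : Ev n → ℝ, IsTestFn K Ω φ →
      (1/2 : ℝ) * ∫ p in crossRegion Ω, (u p.1 - u p.2) * (φ p.1 - φ p.2) * K (p.1 - p.2)
        = ∫ x in Ω, f x * φ x


private lemma maxNegKey (a b : ℝ) :
    (a - b) * (max (-a) 0 - max (-b) 0) ≤ -(max (-a) 0 - max (-b) 0) ^ 2 := by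
  rcases le_total a 0 with ha | ha <;> rcases le_total b 0 with hb | hb
  · rw [max_eq_left (neg_nonneg.2 ha), max_eq_left (neg_nonneg.2 hb)]; nlinarith
  · rw [max_eq_left (neg_nonneg.2 ha), max_eq_right (neg_nonpos.2 hb)]; nlinarith
  · rw [max_eq_right (neg_nonpos.2 ha), max_eq_left (neg_nonneg.2 hb)]; nlinarith
  · rw [max_eq_right (neg_nonpos.2 ha), max_eq_right (neg_nonpos.2 hb)]; nlinarith

private lemma maxNegLip (a b : ℝ) :
    |max (-a) 0 - max (-b) 0| ≤ |a - b| := by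
  have h := abs_max_sub_max_le_abs (-a) (-b) 0
  calc |max (-a) 0 - max (-b) 0| ≤ |-a - -b| := h
    _ = |a - b| := by rw [neg_sub_neg, abs_sub_comm]

private lemma maxNegSq (a b : ℝ) :
    (max (-a) 0 - max (-b) 0) ^ 2 ≤ (a - b) ^ 2 := by
  rw [← sq_abs, ← sq_abs (a - b)]
  exact pow_le_pow_left₀ (abs_nonneg _) (maxNegLip a b) 2

/-- maximum principle.  If `K > 0` a.e., `f ≥ 0` a.e. in `Ω` and `g ≥ 0` a.e.
in `ℝⁿ∖Ω`, then any energy weak solution `u` of `Lu = f` in `Ω`, `u = g` outside, is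
nonnegative a.e. in `Ω`. -/
theorem statement4 {n : ℕ} (hn : 1 ≤ n) (K : Ev n → ℝ) (hK : IsLevyKernel K)
    (hKpos : ∀ᵐ y : Ev n, 0 < K y)
    (Ω : Set (Ev n)) (hΩo : IsOpen Ω) (hΩb : Bornology.IsBounded Ω)
    (f g u : Ev n → ℝ) (hf : MemLp f ⊤ (volume.restrict Ω)) (hg : Measurable g)
    (hu : IsEnergyWeakSol K Ω f g u)
    (hf_nonneg : ∀ᵐ x ∂(volume.restrict Ω), 0 ≤ f x)
    (hg_nonneg : ∀ᵐ x : Ev n, x ∉ Ω → 0 ≤ g x) :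
    ∀ᵐ x : Ev n, x ∈ Ω → 0 ≤ u x := by
  obtain ⟨hKm, hKnn, hKsymm, hKint⟩ := hK
  obtain ⟨hum, huL2, hug, huE, huw⟩ := hu
  set φ : Ev n → ℝ := fun x => max (-u x) 0 with hφdef
  have hφm : Measurable φ := hum.neg.max measurable_const
  have hφnn : ∀ x, 0 ≤ φ x := fun x => le_max_right _ _
  have hΩm : MeasurableSet Ω := hΩo.measurableSet
  -- φ vanishes a.e. outside Ω
  have hφ0 : ∀ᵐ x : Ev n, x ∉ Ω → φ x = 0 := by
    filter_upwards [hug, hg_nonneg] with x h1 h2 hx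
    have hux : 0 ≤ u x := (h1 hx).symm ▸ h2 hx
    simp only [hφdef]
    exact max_eq_right (neg_nonpos.2 hux)
  -- φ is in L²
  have hφL2 : MemLp φ 2 volume := by
    have h1 : MemLp φ 2 (volume.restrict Ω) := by
      refine huL2.of_le hφm.aestronglyMeasurable ?_
      refine Filter.Eventually.of_forall fun x => ?_
      rw [Real.norm_eq_abs, Real.norm_eq_abs, abs_of_nonneg (hφnn x)]
      exact max_le (neg_le_abs _) (abs_nonneg _)
    have h2 : MemLp (Ω.indicator φ) 2 volume :=
      (memLp_indicator_iff_restrict hΩm).2 h1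
    refine h2.ae_eq ?_
    filter_upwards [hφ0] with x hx
    by_cases h : x ∈ Ω
    · simp [Set.indicator_of_mem h]
    · simp [Set.indicator_of_notMem h, hx h]
  -- φ has finite energy
  have hφE : energyE K Ω φ ≤ energyE K Ω u := by
    refine lintegral_mono fun p => ?_
    exact ENNReal.ofReal_le_ofReal
      (mul_le_mul_of_nonneg_right (maxNegSq (u p.1) (u p.2)) (hKnn _))
  have hφtest : IsTestFn K Ω φ := ⟨hφm, hφL2, hφ0, lt_of_le_of_lt hφE huE⟩
  have heq := huw φ hφtest
  set μ2 : Measure (Ev n × Ev n) := volume.restrict (crossRegion Ω) with hμ2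
  have hcrossm : MeasurableSet (crossRegion Ω) := by
    have : crossRegion Ω = (Prod.fst ⁻¹' Ω) ∪ (Prod.snd ⁻¹' Ω) := rfl
    rw [this]
    exact (hΩm.preimage measurable_fst).union (hΩm.preimage measurable_snd)
  have hsubm : Measurable fun p : Ev n × Ev n => p.1 - p.2 :=
    measurable_fst.sub measurable_snd
  set B : Ev n × Ev n → ℝ :=
    fun p => (u p.1 - u p.2) * (φ p.1 - φ p.2) * K (p.1 - p.2) with hBdef
  set C : Ev n × Ev n → ℝ :=
    fun p => (φ p.1 - φ p.2) ^ 2 * K (p.1 - p.2) with hCdef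
  set D : Ev n × Ev n → ℝ :=
    fun p => (u p.1 - u p.2) ^ 2 * K (p.1 - p.2) with hDdef
  have hDnn : ∀ p, 0 ≤ D p := fun p => mul_nonneg (sq_nonneg _) (hKnn _)
  have hCnn : ∀ p, 0 ≤ C p := fun p => mul_nonneg (sq_nonneg _) (hKnn _)
  have hDm : Measurable D :=
    (((hum.comp measurable_fst).sub (hum.comp measurable_snd)).pow_const 2).mul
      (hKm.comp hsubm)
  have hCm : Measurable C :=
    (((hφm.comp measurable_fst).sub (hφm.comp measurable_snd)).pow_const 2).mul
      (hKm.comp hsubm)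
  have hBm : Measurable B :=
    (((hum.comp measurable_fst).sub (hum.comp measurable_snd)).mul
      ((hφm.comp measurable_fst).sub (hφm.comp measurable_snd))).mul (hKm.comp hsubm)
  -- D is integrable on the cross region
  have hDint : Integrable D μ2 := by
    refine ⟨hDm.aestronglyMeasurable, ?_⟩
    rw [hasFiniteIntegral_iff_ofReal (Filter.Eventually.of_forall hDnn)]
    exact huE
  -- pointwise bounds
  have hCD : ∀ p, C p ≤ D p := fun p =>
    mul_le_mul_of_nonneg_right (maxNegSq (u p.1) (u p.2)) (hKnn _)
  have hBD : ∀ p, ‖B p‖ ≤ D p := by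
    intro p
    rw [Real.norm_eq_abs, hBdef]
    have h1 : |φ p.1 - φ p.2| ≤ |u p.1 - u p.2| := maxNegLip (u p.1) (u p.2)
    rw [abs_mul, abs_mul, abs_of_nonneg (hKnn _)]
    have h2 : |u p.1 - u p.2| * |φ p.1 - φ p.2| ≤ (u p.1 - u p.2) ^ 2 := by
      calc |u p.1 - u p.2| * |φ p.1 - φ p.2| ≤ |u p.1 - u p.2| * |u p.1 - u p.2| :=
            mul_le_mul_of_nonneg_left h1 (abs_nonneg _)
        _ = (u p.1 - u p.2) ^ 2 := by rw [abs_mul_abs_self, ← pow_two]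
    exact mul_le_mul_of_nonneg_right h2 (hKnn _)
  have hBint : Integrable B μ2 :=
    hDint.mono' hBm.aestronglyMeasurable (Filter.Eventually.of_forall hBD)
  have hCint : Integrable C μ2 :=
    hDint.mono' hCm.aestronglyMeasurable (Filter.Eventually.of_forall fun p => by
      rw [Real.norm_eq_abs, abs_of_nonneg (hCnn p)]; exact hCD p)
  -- right-hand side nonneg
  have hfφ : 0 ≤ ∫ x in Ω, f x * φ x :=
    integral_nonneg_of_ae (by
      filter_upwards [hf_nonneg] with x hx
      exact mul_nonneg hx (hφnn x))
  have hBnn : 0 ≤ ∫ p, B p ∂μ2 := by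
    have h := heq
    rw [hμ2] at *
    linarith [hfφ, heq]
  -- B ≤ -C pointwise
  have hBC : ∀ p, B p ≤ -C p := by
    intro p
    have h := mul_le_mul_of_nonneg_right (maxNegKey (u p.1) (u p.2)) (hKnn (p.1 - p.2))
    simpa [hBdef, hCdef, hφdef, neg_mul] using h
  have hIBC : ∫ p, B p ∂μ2 ≤ ∫ p, -C p ∂μ2 :=
    integral_mono hBint hCint.neg hBC
  rw [integral_neg] at hIBC
  have hICnn : 0 ≤ ∫ p, C p ∂μ2 := integral_nonneg hCnn
  have hIC0 : ∫ p, C p ∂μ2 = 0 := le_antisymm (by linarith) hICnn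
  have hCae : ∀ᵐ p ∂μ2, C p = 0 := by
    have := (integral_eq_zero_iff_of_nonneg hCnn hCint).1 hIC0
    filter_upwards [this.le] with p hp
    exact le_antisymm hp (hCnn p)
  have hCae' : ∀ᵐ p : Ev n × Ev n, p ∈ crossRegion Ω → C p = 0 :=
    (ae_restrict_iff' hcrossm).1 hCae
  -- K is positive a.e. on the product
  have hNkm : MeasurableSet {y : Ev n | K y ≤ 0} := measurableSet_le hKm measurable_const
  have hNk : volume {y : Ev n | K y ≤ 0} = 0 := by
    have h := hKpos
    rw [ae_iff] at h
    convert h using 2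
    ext y; simp [not_lt]
  have hKprod : ∀ᵐ p : Ev n × Ev n, 0 < K (p.1 - p.2) := by
    rw [ae_iff]
    have hset : {p : Ev n × Ev n | ¬ 0 < K (p.1 - p.2)} =
        (fun p : Ev n × Ev n => (p.1 - p.2, p.2)) ⁻¹' ({y | K y ≤ 0} ×ˢ univ) := by
      ext p; simp [not_lt]
    rw [hset, Measure.volume_eq_prod _ _,
      (measurePreserving_sub_prod volume volume).measure_preimage
        ((hNkm.prod MeasurableSet.univ).nullMeasurableSet),
      Measure.prod_prod, hNk, zero_mul]
  -- φ is a.e. constant across the cross region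
  have h1 : ∀ᵐ p : Ev n × Ev n, p ∈ crossRegion Ω → φ p.1 = φ p.2 := by
    filter_upwards [hCae', hKprod] with p hC hKp hp
    have h := hC hp
    rw [hCdef] at h
    have hsq : (φ p.1 - φ p.2) ^ 2 = 0 := by
      rcases mul_eq_zero.1 h with h' | h'
      · exact h'
      · exact absurd h' (ne_of_gt hKp)
    have := pow_eq_zero_iff (n := 2) (by norm_num) |>.1 hsq
    linarith [sub_eq_zero.1 this]
  -- lift vanishing of φ outside Ω to the second coordinate
  have h2 : ∀ᵐ p : Ev n × Ev n, p.2 ∉ Ω → φ p.2 = 0 := by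
    rw [ae_iff]
    have hset : {p : Ev n × Ev n | ¬(p.2 ∉ Ω → φ p.2 = 0)} =
        (univ : Set (Ev n)) ×ˢ {x : Ev n | ¬(x ∉ Ω → φ x = 0)} := by
      ext p; simp [Set.mem_prod]
    rw [hset, Measure.volume_eq_prod _ _, Measure.prod_prod]
    rw [ae_iff] at hφ0
    rw [hφ0, mul_zero]
  have h12 := h1.and h2
  rw [Measure.volume_eq_prod _ _] at h12
  have h3 := Measure.ae_ae_of_ae_prod h12
  -- the complement of Ω has positive measure
  have hU : (volume : Measure (Ev n)) univ = ∞ := by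
    haveI : Nonempty (Fin n) := Fin.pos_iff_nonempty.1 hn
    haveI : Nontrivial (Ev n) := by
      rcases exists_ne (0 : EuclideanSpace ℝ (Fin n)) with ⟨x, hx⟩
      exact ⟨x, 0, hx⟩
    exact measure_univ_of_isAddLeftInvariant volume
  have hΩfin : volume Ω < ∞ := hΩb.measure_lt_top
  have hcompl : volume Ωᶜ ≠ 0 := by
    intro h
    have hle : (volume : Measure (Ev n)) univ ≤ volume Ω + volume Ωᶜ := by
      rw [← Set.union_compl_self Ω]
      exact measure_union_le _ _
    rw [hU, h, add_zero] at hle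
    exact absurd (lt_of_le_of_lt hle hΩfin) (lt_irrefl _)
  -- conclude
  filter_upwards [h3] with x hx hxΩ
  have hfreq : ∃ᵐ z : Ev n ∂volume, z ∈ Ωᶜ := frequently_ae_mem_iff.2 hcompl
  obtain ⟨z, hz1, hz2⟩ := (hx.and_frequently hfreq).exists
  have hcross : (x, z) ∈ crossRegion Ω := Or.inl hxΩ
  have hφx : φ x = 0 := (hz1.1 hcross).trans (hz1.2 hz2)
  have hmax : max (-u x) 0 = 0 := hφx
  have := le_max_left (-u x) (0 : ℝ)
  rw [hmax] at this
  linarith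
end
end

section
/- Let K be a Lévy kernel on ℝⁿ with K(y) > 0 for almost every y, let Ω ⊂ ℝⁿ be a bounded open set, f₁, f₂ ∈ L^∞(Ω), and let g₁, g₂ be measurable functions on ℝⁿ∖Ω. Let u₁ be an energy weak solution of Lu₁ = f₁ in Ω with u₁ = g₁ in ℝⁿ∖Ω, and let u₂ be an energy weak solution of Lu₂ = f₂ in Ω with u₂ = g₂ in ℝⁿ∖Ω. If f₁ ≥ f₂ almost everywhere in Ω and g₁ ≥ g₂ almost everywhere in ℝⁿ∖Ω, then u₁ ≥ u₂ almost everywhere in Ω. -/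
open MeasureTheory Metric Set
open scoped ENNReal

noncomputable section

-- auxiliary real lemmas
lemma aux_key (a b : ℝ) : (max a 0 - max b 0)^2 ≤ (a - b) * (max a 0 - max b 0) := by
  rcases le_total a 0 with ha | ha <;> rcases le_total b 0 with hb | hb <;>
    simp [max_eq_left, max_eq_right, ha, hb] <;> nlinarith

lemma aux_lip (a b : ℝ) : (max a 0 - max b 0)^2 ≤ (a - b)^2 := by
  rcases le_total a 0 with ha | ha <;> rcases le_total b 0 with hb | hb <;>
    simp [max_eq_left, max_eq_right, ha, hb] <;> nlinarith

lemma aux_abs (a b c k : ℝ) (hk : 0 ≤ k) : |a * b * k| ≤ (c^2 + a^2 + b^2) * k := by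
  rw [abs_mul, abs_of_nonneg hk]
  have h1 : |a * b| ≤ a^2 + b^2 := by
    rw [abs_mul]
    nlinarith [sq_nonneg (|a| - |b|), sq_abs a, sq_abs b, abs_nonneg a, abs_nonneg b]
  nlinarith [sq_nonneg c, abs_nonneg (a*b)]

set_option maxHeartbeats 2000000 in
/-- comparison principle.  If `f₁ ≥ f₂` a.e. in `Ω` and `g₁ ≥ g₂` a.e. in
`ℝⁿ∖Ω`, then the corresponding energy weak solutions satisfy `u₁ ≥ u₂` a.e. in `Ω`. -/
theorem statement5 {n : ℕ} (hn : 1 ≤ n) (K : Ev n → ℝ) (hK : IsLevyKernel K)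
    (hKpos : ∀ᵐ y : Ev n, 0 < K y)
    (Ω : Set (Ev n)) (hΩo : IsOpen Ω) (hΩb : Bornology.IsBounded Ω)
    (f₁ f₂ g₁ g₂ u₁ u₂ : Ev n → ℝ)
    (hf₁ : MemLp f₁ ⊤ (volume.restrict Ω)) (hf₂ : MemLp f₂ ⊤ (volume.restrict Ω))
    (hg₁ : Measurable g₁) (hg₂ : Measurable g₂)
    (hu₁ : IsEnergyWeakSol K Ω f₁ g₁ u₁) (hu₂ : IsEnergyWeakSol K Ω f₂ g₂ u₂)
    (hf_le : ∀ᵐ x ∂(volume.restrict Ω), f₂ x ≤ f₁ x)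
    (hg_le : ∀ᵐ x : Ev n, x ∉ Ω → g₂ x ≤ g₁ x) :
    ∀ᵐ x : Ev n, x ∈ Ω → u₂ x ≤ u₁ x := by
  obtain ⟨hKm, hKnn, hKsymm, hKint⟩ := hK
  obtain ⟨hu₁m, hu₁L2, hu₁bd, hu₁E, hu₁weak⟩ := hu₁
  obtain ⟨hu₂m, hu₂L2, hu₂bd, hu₂E, hu₂weak⟩ := hu₂
  have hΩm : MeasurableSet Ω := hΩo.measurableSet
  haveI : IsFiniteMeasure (volume.restrict Ω) := by
    constructor
    rw [Measure.restrict_apply_univ]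
    exact hΩb.measure_lt_top
  set w : Ev n → ℝ := fun x => u₂ x - u₁ x with hw
  set p : Ev n → ℝ := fun x => max (w x) 0 with hpdef
  have hwm : Measurable w := hu₂m.sub hu₁m
  have hpm : Measurable p := hwm.max measurable_const
  have hpnn : ∀ x, 0 ≤ p x := fun x => le_max_right _ _
  -- p vanishes a.e. outside Ω
  have hp0 : ∀ᵐ x : Ev n, x ∉ Ω → p x = 0 := by
    filter_upwards [hu₁bd, hu₂bd, hg_le] with x h1 h2 h3 hx
    simp only [hpdef, hw]
    rw [h1 hx, h2 hx]
    exact max_eq_right (by linarith [h3 hx])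
  -- measurability of the cross region
  have hCRm : MeasurableSet (crossRegion Ω) := by
    have : crossRegion Ω = Prod.fst ⁻¹' Ω ∪ Prod.snd ⁻¹' Ω := rfl
    rw [this]
    exact (hΩm.preimage measurable_fst).union (hΩm.preimage measurable_snd)
  -- measurability of energy integrands
  have hmeas_en : ∀ v : Ev n → ℝ, Measurable v →
      Measurable (fun q : Ev n × Ev n => (v q.1 - v q.2)^2 * K (q.1 - q.2)) := by
    intro v hv
    exact (((hv.comp measurable_fst).sub (hv.comp measurable_snd)).pow_const 2).mul
      (hKm.comp (measurable_fst.sub measurable_snd))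
  have hKq_nn : ∀ q : Ev n × Ev n, 0 ≤ K (q.1 - q.2) := fun q => hKnn _
  -- finite energy of w
  have hwE : energyE K Ω w < ⊤ := by
    have hle : ∀ q : Ev n × Ev n,
        ENNReal.ofReal ((w q.1 - w q.2)^2 * K (q.1 - q.2))
          ≤ 2 * ENNReal.ofReal ((u₂ q.1 - u₂ q.2)^2 * K (q.1 - q.2))
            + 2 * ENNReal.ofReal ((u₁ q.1 - u₁ q.2)^2 * K (q.1 - q.2)) := by
      intro q
      have h2 : (w q.1 - w q.2)^2 * K (q.1 - q.2)
          ≤ 2 * ((u₂ q.1 - u₂ q.2)^2 * K (q.1 - q.2))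
            + 2 * ((u₁ q.1 - u₁ q.2)^2 * K (q.1 - q.2)) := by
        have hk := hKq_nn q
        have : (w q.1 - w q.2)^2 ≤ 2 * (u₂ q.1 - u₂ q.2)^2 + 2 * (u₁ q.1 - u₁ q.2)^2 := by
          simp only [hw]; nlinarith [sq_nonneg ((u₂ q.1 - u₂ q.2) + (u₁ q.1 - u₁ q.2))]
        nlinarith
      calc ENNReal.ofReal ((w q.1 - w q.2)^2 * K (q.1 - q.2))
          ≤ ENNReal.ofReal (2 * ((u₂ q.1 - u₂ q.2)^2 * K (q.1 - q.2))
              + 2 * ((u₁ q.1 - u₁ q.2)^2 * K (q.1 - q.2))) := ENNReal.ofReal_le_ofReal h2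
        _ ≤ ENNReal.ofReal (2 * ((u₂ q.1 - u₂ q.2)^2 * K (q.1 - q.2)))
              + ENNReal.ofReal (2 * ((u₁ q.1 - u₁ q.2)^2 * K (q.1 - q.2))) :=
            ENNReal.ofReal_add_le
        _ = 2 * ENNReal.ofReal ((u₂ q.1 - u₂ q.2)^2 * K (q.1 - q.2))
              + 2 * ENNReal.ofReal ((u₁ q.1 - u₁ q.2)^2 * K (q.1 - q.2)) := by
            rw [ENNReal.ofReal_mul (p := (2:ℝ)) (by norm_num),
              ENNReal.ofReal_mul (p := (2:ℝ)) (by norm_num)]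
            norm_num
    calc energyE K Ω w
        ≤ ∫⁻ q in crossRegion Ω,
            (2 * ENNReal.ofReal ((u₂ q.1 - u₂ q.2)^2 * K (q.1 - q.2))
              + 2 * ENNReal.ofReal ((u₁ q.1 - u₁ q.2)^2 * K (q.1 - q.2))) :=
          lintegral_mono fun q => hle q
      _ = 2 * energyE K Ω u₂ + 2 * energyE K Ω u₁ := by
          rw [lintegral_add_left, lintegral_const_mul, lintegral_const_mul]
          · rfl
          · exact ((hmeas_en u₁ hu₁m).ennreal_ofReal)
          · exact ((hmeas_en u₂ hu₂m).ennreal_ofReal)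
          · exact ((hmeas_en u₂ hu₂m).ennreal_ofReal).const_mul 2
      _ < ⊤ := by
          refine ENNReal.add_lt_top.mpr ⟨?_, ?_⟩ <;>
            exact ENNReal.mul_lt_top (by norm_num) (by assumption)
  -- finite energy of p
  have hpE : energyE K Ω p < ⊤ := by
    refine lt_of_le_of_lt (lintegral_mono fun q => ?_) hwE
    refine ENNReal.ofReal_le_ofReal ?_
    exact mul_le_mul_of_nonneg_right (aux_lip _ _) (hKq_nn q)
  -- p ∈ L²(restrict Ω)
  have hwL2 : MemLp w 2 (volume.restrict Ω) := hu₂L2.sub hu₁L2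
  have hpL2r : MemLp p 2 (volume.restrict Ω) := by
    refine hwL2.of_le hpm.aestronglyMeasurable (ae_of_all _ fun x => ?_)
    simp only [Real.norm_eq_abs, hpdef]
    rw [abs_of_nonneg (le_max_right _ _)]
    exact max_le (le_abs_self _) (abs_nonneg _)
  -- p ∈ L²(volume)
  have hpL2 : MemLp p 2 volume := by
    have hc : MemLp p 2 (volume.restrict Ωᶜ) := by
      have h0 : p =ᵐ[volume.restrict Ωᶜ] 0 := by
        filter_upwards [ae_restrict_of_ae hp0, ae_restrict_mem hΩm.compl] with x hx hxc
        exact hx hxc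
      exact (MemLp.zero).ae_eq h0.symm
    have hi : MemLp (Ω.indicator p) 2 volume := (memLp_indicator_iff_restrict hΩm).mpr hpL2r
    refine hi.ae_eq ?_
    filter_upwards [hp0] with x hx
    by_cases hmem : x ∈ Ω
    · simp [Set.indicator_of_mem hmem]
    · simp [Set.indicator_of_notMem hmem, hx hmem]
  have hptest : IsTestFn K Ω p := ⟨hpm, hpL2, hp0, hpE⟩
  -- integrability of pairings over the cross region
  have hGint : Integrable (fun q : Ev n × Ev n =>
      ((u₁ q.1 - u₁ q.2)^2 + (u₂ q.1 - u₂ q.2)^2 + (p q.1 - p q.2)^2) * K (q.1 - q.2))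
      ((volume : Measure (Ev n × Ev n)).restrict (crossRegion Ω)) := by
    have hGm : Measurable (fun q : Ev n × Ev n =>
        ((u₁ q.1 - u₁ q.2)^2 + (u₂ q.1 - u₂ q.2)^2 + (p q.1 - p q.2)^2) * K (q.1 - q.2)) := by
      refine Measurable.mul ?_ (hKm.comp (measurable_fst.sub measurable_snd))
      exact ((((hu₁m.comp measurable_fst).sub (hu₁m.comp measurable_snd)).pow_const 2).add
        (((hu₂m.comp measurable_fst).sub (hu₂m.comp measurable_snd)).pow_const 2)).add
        (((hpm.comp measurable_fst).sub (hpm.comp measurable_snd)).pow_const 2)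
    refine ⟨hGm.aestronglyMeasurable, ?_⟩
    rw [hasFiniteIntegral_iff_ofReal (ae_of_all _ fun q => ?_)]
    swap
    · have := hKq_nn q
      positivity
    have heq : ∀ q : Ev n × Ev n, ENNReal.ofReal
        (((u₁ q.1 - u₁ q.2)^2 + (u₂ q.1 - u₂ q.2)^2 + (p q.1 - p q.2)^2) * K (q.1 - q.2))
        = ENNReal.ofReal ((u₁ q.1 - u₁ q.2)^2 * K (q.1 - q.2))
          + ENNReal.ofReal ((u₂ q.1 - u₂ q.2)^2 * K (q.1 - q.2))
          + ENNReal.ofReal ((p q.1 - p q.2)^2 * K (q.1 - q.2)) := by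
      intro q
      have hk := hKq_nn q
      rw [add_mul, add_mul, ENNReal.ofReal_add (by positivity) (by positivity),
        ENNReal.ofReal_add (by positivity) (by positivity)]
    calc (∫⁻ q in crossRegion Ω, ENNReal.ofReal
          (((u₁ q.1 - u₁ q.2)^2 + (u₂ q.1 - u₂ q.2)^2 + (p q.1 - p q.2)^2) * K (q.1 - q.2)))
        = energyE K Ω u₁ + energyE K Ω u₂ + energyE K Ω p := by
          simp_rw [heq]
          rw [lintegral_add_right _ ((hmeas_en p hpm).ennreal_ofReal),
            lintegral_add_right _ ((hmeas_en u₂ hu₂m).ennreal_ofReal)]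
          rfl
      _ < ⊤ := by
          refine ENNReal.add_lt_top.mpr ⟨ENNReal.add_lt_top.mpr ⟨hu₁E, hu₂E⟩, hpE⟩
  have hpairm : ∀ v : Ev n → ℝ, Measurable v → Measurable (fun q : Ev n × Ev n =>
      (v q.1 - v q.2) * (p q.1 - p q.2) * K (q.1 - q.2)) := by
    intro v hv
    exact (((hv.comp measurable_fst).sub (hv.comp measurable_snd)).mul
      ((hpm.comp measurable_fst).sub (hpm.comp measurable_snd))).mul
      (hKm.comp (measurable_fst.sub measurable_snd))
  have hA₁ : Integrable (fun q : Ev n × Ev n =>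
      (u₁ q.1 - u₁ q.2) * (p q.1 - p q.2) * K (q.1 - q.2))
      ((volume : Measure (Ev n × Ev n)).restrict (crossRegion Ω)) := by
    refine hGint.mono' (hpairm u₁ hu₁m).aestronglyMeasurable (ae_of_all _ fun q => ?_)
    rw [Real.norm_eq_abs]
    refine le_trans (aux_abs (u₁ q.1 - u₁ q.2) (p q.1 - p q.2) (u₂ q.1 - u₂ q.2)
      (K (q.1 - q.2)) (hKq_nn q)) (le_of_eq (by ring))
  have hA₂ : Integrable (fun q : Ev n × Ev n =>
      (u₂ q.1 - u₂ q.2) * (p q.1 - p q.2) * K (q.1 - q.2))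
      ((volume : Measure (Ev n × Ev n)).restrict (crossRegion Ω)) := by
    refine hGint.mono' (hpairm u₂ hu₂m).aestronglyMeasurable (ae_of_all _ fun q => ?_)
    rw [Real.norm_eq_abs]
    refine le_trans (aux_abs (u₂ q.1 - u₂ q.2) (p q.1 - p q.2) (u₁ q.1 - u₁ q.2)
      (K (q.1 - q.2)) (hKq_nn q)) (le_of_eq (by ring))
  -- integrability of f·p on Ω
  have hpint : Integrable p (volume.restrict Ω) := hpL2r.integrable (by norm_num)
  have hfint : ∀ f : Ev n → ℝ, MemLp f ⊤ (volume.restrict Ω) →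
      Integrable (fun x => f x * p x) (volume.restrict Ω) := by
    intro f hf
    have h := hf.2
    rw [eLpNorm_exponent_top] at h
    have := hpint.essSup_smul hf.aestronglyMeasurable h.ne
    simpa [smul_eq_mul] using this
  -- the key inequality from the two weak formulations
  have hdiff : (∫ q in crossRegion Ω,
      (u₂ q.1 - u₂ q.2) * (p q.1 - p q.2) * K (q.1 - q.2))
      - (∫ q in crossRegion Ω, (u₁ q.1 - u₁ q.2) * (p q.1 - p q.2) * K (q.1 - q.2)) ≤ 0 := by
    have h₂ := hu₂weak p hptest
    have h₁ := hu₁weak p hptest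
    have hfp : ∫ x in Ω, f₂ x * p x ≤ ∫ x in Ω, f₁ x * p x := by
      refine integral_mono_ae (hfint f₂ hf₂) (hfint f₁ hf₁) ?_
      filter_upwards [hf_le] with x hx
      exact mul_le_mul_of_nonneg_right hx (hpnn x)
    linarith
  -- integral of (p-diff)² K vanishes
  have hBint : Integrable (fun q : Ev n × Ev n => (p q.1 - p q.2)^2 * K (q.1 - q.2))
      ((volume : Measure (Ev n × Ev n)).restrict (crossRegion Ω)) := by
    refine (hA₂.sub hA₁).mono' (hmeas_en p hpm).aestronglyMeasurable (ae_of_all _ fun q => ?_)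
    rw [Real.norm_eq_abs, abs_of_nonneg (mul_nonneg (sq_nonneg _) (hKq_nn q))]
    calc (p q.1 - p q.2)^2 * K (q.1 - q.2)
        ≤ (w q.1 - w q.2) * (p q.1 - p q.2) * K (q.1 - q.2) :=
          mul_le_mul_of_nonneg_right (aux_key (w q.1) (w q.2)) (hKq_nn q)
      _ = (u₂ q.1 - u₂ q.2) * (p q.1 - p q.2) * K (q.1 - q.2)
            - (u₁ q.1 - u₁ q.2) * (p q.1 - p q.2) * K (q.1 - q.2) := by
          simp only [hw]; ring
  have hBle : (∫ q in crossRegion Ω, (p q.1 - p q.2)^2 * K (q.1 - q.2)) ≤ 0 := by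
    have hmono : (∫ q in crossRegion Ω, (p q.1 - p q.2)^2 * K (q.1 - q.2))
        ≤ ∫ q in crossRegion Ω,
            ((u₂ q.1 - u₂ q.2) * (p q.1 - p q.2) * K (q.1 - q.2)
              - (u₁ q.1 - u₁ q.2) * (p q.1 - p q.2) * K (q.1 - q.2)) := by
      refine integral_mono_ae hBint (hA₂.sub hA₁) (ae_of_all _ fun q => ?_)
      calc (p q.1 - p q.2)^2 * K (q.1 - q.2)
          ≤ (w q.1 - w q.2) * (p q.1 - p q.2) * K (q.1 - q.2) :=
            mul_le_mul_of_nonneg_right (aux_key (w q.1) (w q.2)) (hKq_nn q)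
        _ = _ := by simp only [hw]; ring
    rw [integral_sub hA₂ hA₁] at hmono
    linarith
  have hB0 : (fun q : Ev n × Ev n => (p q.1 - p q.2)^2 * K (q.1 - q.2))
      =ᵐ[(volume : Measure (Ev n × Ev n)).restrict (crossRegion Ω)] 0 := by
    refine (integral_eq_zero_iff_of_nonneg_ae
      (ae_of_all _ fun q => mul_nonneg (sq_nonneg _) (hKq_nn q)) hBint).mp ?_
    exact le_antisymm hBle (integral_nonneg fun q => mul_nonneg (sq_nonneg _) (hKq_nn q))
  -- a.e. positivity of K on the product
  have hKprodpos : ∀ᵐ q : Ev n × Ev n, 0 < K (q.1 - q.2) := by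
    have hSm : MeasurableSet {y : Ev n | ¬ 0 < K y} :=
      (measurableSet_lt measurable_const hKm).compl
    have hS0 : volume {y : Ev n | ¬ 0 < K y} = 0 := by
      rw [← ae_iff]; exact hKpos
    rw [ae_iff]
    have hTm : MeasurableSet {q : Ev n × Ev n | ¬ 0 < K (q.1 - q.2)} :=
      hSm.preimage (measurable_fst.sub measurable_snd)
    show (volume : Measure (Ev n)).prod volume {q | ¬ 0 < K (q.1 - q.2)} = 0
    rw [Measure.measure_prod_null hTm]
    refine ae_of_all _ fun x => ?_
    show volume (Prod.mk x ⁻¹' {q : Ev n × Ev n | ¬ 0 < K (q.1 - q.2)}) = (0 : ℝ≥0∞)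
    have : Prod.mk x ⁻¹' {q : Ev n × Ev n | ¬ 0 < K (q.1 - q.2)}
        = (fun z => x - z) ⁻¹' {y : Ev n | ¬ 0 < K y} := rfl
    rw [this, (Measure.measurePreserving_sub_left volume x).measure_preimage
      hSm.nullMeasurableSet]
    exact hS0
  -- transfer to the restricted product measure on Ω ×ˢ Ωᶜ
  have hsub : (Ω ×ˢ Ωᶜ : Set (Ev n × Ev n)) ⊆ crossRegion Ω := fun q hq => Or.inl hq.1
  have hB0' : ∀ᵐ q ∂((volume : Measure (Ev n × Ev n)).restrict (Ω ×ˢ Ωᶜ)),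
      (p q.1 - p q.2)^2 * K (q.1 - q.2) = 0 :=
    ae_restrict_of_ae_restrict_of_subset hsub hB0
  have hKpos' : ∀ᵐ q ∂((volume : Measure (Ev n × Ev n)).restrict (Ω ×ˢ Ωᶜ)),
      0 < K (q.1 - q.2) := ae_restrict_of_ae hKprodpos
  have hp2zero : ∀ᵐ q ∂((volume : Measure (Ev n × Ev n)).restrict (Ω ×ˢ Ωᶜ)),
      q.2 ∉ Ω → p q.2 = 0 := by
    refine ae_restrict_of_ae ?_
    rw [ae_iff] at hp0 ⊢
    obtain ⟨N, hNsub, hNm, hN0⟩ := exists_measurable_superset_of_null hp0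
    refine measure_mono_null (t := (Set.univ ×ˢ N : Set (Ev n × Ev n)))
      (fun q hq => Set.mem_prod.mpr ⟨Set.mem_univ q.1, hNsub hq⟩) ?_
    show (volume : Measure (Ev n)).prod volume (Set.univ ×ˢ N) = 0
    rw [Measure.prod_prod, hN0, mul_zero]
  have hfinal : ∀ᵐ q ∂((volume : Measure (Ev n × Ev n)).restrict (Ω ×ˢ Ωᶜ)), p q.1 = 0 := by
    filter_upwards [hB0', hKpos', hp2zero,
      ae_restrict_mem (hΩm.prod hΩm.compl)] with q h1 h2 h3 h4
    have hp2 : p q.2 = 0 := h3 h4.2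
    have : (p q.1 - p q.2)^2 = 0 := by
      rcases mul_eq_zero.mp h1 with h | h
      · exact h
      · exact absurd h (ne_of_gt h2)
    have := pow_eq_zero_iff (n := 2) (by norm_num) |>.mp this
    linarith [hp2, sub_eq_zero.mp this]
  -- Fubini
  have hfinal' : ∀ᵐ x ∂(volume.restrict Ω), ∀ᵐ z ∂(volume.restrict Ωᶜ), p x = 0 := by
    have : ((volume : Measure (Ev n × Ev n)).restrict (Ω ×ˢ Ωᶜ))
        = ((volume : Measure (Ev n)).restrict Ω).prod ((volume : Measure (Ev n)).restrict Ωᶜ) :=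
      (Measure.prod_restrict Ω Ωᶜ).symm
    rw [this] at hfinal
    exact Measure.ae_ae_of_ae_prod hfinal
  have hcompl_pos : 0 < volume (Ωᶜ : Set (Ev n)) := by
    haveI : Nonempty (Fin n) := ⟨⟨0, hn⟩⟩
    obtain ⟨r, hr⟩ := hΩb.subset_ball 0
    obtain ⟨c, hc⟩ := NormedSpace.exists_lt_norm ℝ (Ev n) (|r| + 1)
    have hball : ball c 1 ⊆ Ωᶜ := by
      intro y hy hyΩ
      have h1 : ‖y‖ < r := by simpa [mem_ball, dist_eq_norm] using hr hyΩ
      have h2 : ‖y - c‖ < 1 := by simpa [mem_ball, dist_eq_norm] using hy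
      have h3 := norm_sub_norm_le y c
      have h4 := le_abs_self r
      have h5 := abs_norm c ▸ abs_nonneg (‖c‖)
      linarith [norm_sub_norm_le c y, norm_sub_rev y c ▸ h2]
    calc (0:ℝ≥0∞) < volume (ball c 1) := measure_ball_pos _ _ one_pos
      _ ≤ volume Ωᶜ := measure_mono hball
  have hpzero : ∀ᵐ x ∂(volume.restrict Ω), p x = 0 := by
    filter_upwards [hfinal'] with x hx
    by_contra hne
    have h0 : (volume.restrict Ωᶜ) {_z : Ev n | ¬ p x = 0} = 0 := ae_iff.mp hx
    have huniv : {_z : Ev n | ¬ p x = 0} = (Set.univ : Set (Ev n)) :=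
      Set.eq_univ_of_forall fun _ => hne
    rw [huniv, Measure.restrict_apply_univ] at h0
    exact absurd h0 (ne_of_gt hcompl_pos)
  have := ae_imp_of_ae_restrict hpzero
  filter_upwards [this] with x hx hmem
  have hp := hx hmem
  have : w x ≤ 0 := by
    by_contra hgt
    push_neg at hgt
    have : p x = w x := max_eq_left hgt.le
    rw [hp] at this
    linarith
  simpa [hw, sub_nonpos] using this
end
end

section
/- Let K be a Lévy kernel on ℝⁿ with K(y) > 0 for almost every y, let Ω ⊂ ℝⁿ be a bounded open set contained in a ball of radius R centered at the origin, and set C = (∫_{ℝⁿ∖B_{2R}} K(y) dy)^{−1}. Let f ∈ L^∞(Ω), g ∈ L^∞(ℝⁿ∖Ω), and let u be an energy weak solution of Lu = f in Ω with u = g in ℝⁿ∖Ω. Then |u| ≤ ‖g‖_{L^∞(ℝⁿ∖Ω)} + C‖f‖_{L^∞(Ω)} almost everywhere in Ω. -/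
open MeasureTheory Metric Set
open scoped ENNReal

noncomputable section

/-! ### Auxiliary lemmas -/

lemma aux_mono (a b M : ℝ) : 0 ≤ (a - b) * (max (a - M) 0 - max (b - M) 0) := by
  rcases le_total a b with h | h
  · have h2 : max (a - M) 0 ≤ max (b - M) 0 := max_le_max (by linarith) le_rfl
    nlinarith
  · have h2 : max (b - M) 0 ≤ max (a - M) 0 := max_le_max (by linarith) le_rfl
    nlinarith

lemma aux_absmax (t M : ℝ) (hM : 0 ≤ M) : |max (t - M) 0| ≤ |t| := by
  rw [abs_of_nonneg (le_max_right _ _)]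
  rcases le_total t M with h | h
  · rw [max_eq_right (by linarith : t - M ≤ 0)]; exact abs_nonneg t
  · rw [max_eq_left (by linarith : (0:ℝ) ≤ t - M)]
    calc t - M ≤ t := by linarith
      _ ≤ |t| := le_abs_self t

lemma abs_le_toReal_of_memLpTop {α : Type*} [MeasurableSpace α] {μ : Measure α} {f : α → ℝ}
    (hf : MemLp f ⊤ μ) : ∀ᵐ x ∂μ, |f x| ≤ (eLpNorm f ⊤ μ).toReal := by
  have h := ae_le_eLpNormEssSup (f := f) (μ := μ)
  have h2 : eLpNormEssSup f μ ≠ ⊤ := by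
    rw [← eLpNorm_exponent_top]; exact hf.2.ne
  filter_upwards [h] with x hx
  have h3 : ((‖f x‖₊ : ℝ≥0∞)).toReal ≤ (eLpNormEssSup f μ).toReal := ENNReal.toReal_mono h2 hx
  simpa [eLpNorm_exponent_top, Real.norm_eq_abs] using h3

lemma ae_prod_of_ae {n : ℕ} {P : Ev n → Prop} (h : ∀ᵐ x : Ev n, P x) :
    ∀ᵐ p : Ev n × Ev n, P p.1 ∧ P p.2 := by
  rw [Measure.volume_eq_prod, ae_iff]
  rw [ae_iff] at h
  set t := toMeasurable volume {x : Ev n | ¬ P x} with ht_def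
  have ht : volume t = 0 := by rw [ht_def, measure_toMeasurable]; exact h
  have h1 : (volume.prod volume) (t ×ˢ (univ : Set (Ev n))) = 0 := by
    rw [Measure.prod_prod, ht, zero_mul]
  have h2 : (volume.prod volume) ((univ : Set (Ev n)) ×ˢ t) = 0 := by
    rw [Measure.prod_prod, ht, mul_zero]
  refine measure_mono_null (fun p hp => ?_) (measure_union_null h1 h2)
  simp only [mem_setOf_eq, not_and_or] at hp
  rcases hp with hp | hp
  · exact Or.inl ⟨subset_toMeasurable _ _ hp, mem_univ _⟩
  · exact Or.inr ⟨mem_univ _, subset_toMeasurable _ _ hp⟩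

set_option maxHeartbeats 1000000 in
/-- One-sided bound. -/
lemma oneSided {n : ℕ} (hn : 1 ≤ n) (K : Ev n → ℝ) (hK : IsLevyKernel K)
    (hKpos : ∀ᵐ y : Ev n, 0 < K y)
    (Ω : Set (Ev n)) (hΩo : IsOpen Ω) (R : ℝ) (hR : 0 < R) (hΩR : Ω ⊆ ball (0 : Ev n) R)
    (f g u : Ev n → ℝ) (hf : MemLp f ⊤ (volume.restrict Ω)) (hg : Measurable g)
    (hg' : MemLp g ⊤ (volume.restrict Ωᶜ))
    (hu : IsEnergyWeakSol K Ω f g u) (ε : ℝ) (hε : 0 < ε) :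
    ∀ᵐ x : Ev n, x ∈ Ω →
      u x ≤ (eLpNorm g ⊤ (volume.restrict Ωᶜ)).toReal
        + (∫ y in (ball (0 : Ev n) (2 * R))ᶜ, K y)⁻¹ *
            (eLpNorm f ⊤ (volume.restrict Ω)).toReal + ε := by
  obtain ⟨hKm, hK0, hKsym, hKint⟩ := hK
  obtain ⟨hum, huL2, hug, huE, huw⟩ := hu
  set B₂ : Set (Ev n) := ball (0 : Ev n) (2 * R) with hB₂
  set Mg : ℝ := (eLpNorm g ⊤ (volume.restrict Ωᶜ)).toReal with hMg_def
  set Nf : ℝ := (eLpNorm f ⊤ (volume.restrict Ω)).toReal with hNf_def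
  have hMg0 : 0 ≤ Mg := ENNReal.toReal_nonneg
  have hNf0 : 0 ≤ Nf := ENNReal.toReal_nonneg
  have hB₂m : MeasurableSet (B₂ᶜ) := measurableSet_ball.compl
  -- K is integrable on B₂ᶜ
  have hc : (0:ℝ) < min ((2*R)^2) 1 := by positivity
  have hnormB₂ : ∀ y : Ev n, y ∈ B₂ᶜ → 2 * R ≤ ‖y‖ := by
    intro y hy
    have h1 : ¬ (‖y‖ < 2 * R) := by
      simpa [hB₂, mem_ball, dist_zero_right] using hy
    linarith [not_lt.mp h1]
  have hKintB : IntegrableOn K B₂ᶜ volume := by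
    apply Integrable.mono' (g := fun y => (min ((2*R)^2) 1)⁻¹ * (min (‖y‖^2) 1 * K y))
      ((hKint.restrict (s := B₂ᶜ)).const_mul _) hKm.aestronglyMeasurable
    rw [ae_restrict_iff' hB₂m]
    refine ae_of_all _ fun y hy => ?_
    have h2R : 2 * R ≤ ‖y‖ := hnormB₂ y hy
    have hmin : min ((2*R)^2) 1 ≤ min (‖y‖^2) 1 := by
      refine min_le_min ?_ le_rfl
      nlinarith
    rw [Real.norm_eq_abs, abs_of_nonneg (hK0 y), le_inv_mul_iff₀ hc]
    calc min ((2*R)^2) 1 * K y ≤ min (‖y‖^2) 1 * K y :=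
          mul_le_mul_of_nonneg_right hmin (hK0 y)
      _ = min (‖y‖^2) 1 * K y := rfl
  set IK : ℝ := ∫ y in B₂ᶜ, K y with hIK_def
  -- IK > 0
  have hIKpos : 0 < IK := by
    rw [hIK_def, setIntegral_pos_iff_support_of_nonneg_ae (ae_of_all _ hK0) hKintB]
    set p0 : Ev n := EuclideanSpace.single (⟨0, hn⟩ : Fin n) (3 * R) with hp0
    have hp0norm : ‖p0‖ = 3 * R := by
      rw [hp0, EuclideanSpace.norm_single, Real.norm_eq_abs, abs_of_pos (by linarith)]
    have hball : ball p0 R ⊆ B₂ᶜ := by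
      intro y hy
      rw [mem_ball, dist_eq_norm] at hy
      simp only [hB₂, mem_compl_iff, mem_ball, dist_zero_right, not_lt]
      calc 2 * R = 3 * R - R := by ring
        _ ≤ ‖p0‖ - ‖y - p0‖ := by rw [hp0norm]; linarith [hy.le]
        _ ≤ ‖y‖ := by
            have := norm_sub_norm_le p0 y
            have h2 : ‖p0 - y‖ = ‖y - p0‖ := norm_sub_rev _ _
            linarith [norm_sub_norm_le p0 y]
    have hnull : volume {y : Ev n | ¬ 0 < K y} = 0 := by
      rw [← ae_iff] at *; exact hKpos
    have hsub : {y : Ev n | 0 < K y} ∩ ball p0 R ⊆ Function.support K ∩ B₂ᶜ := by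
      rintro y ⟨hy1, hy2⟩
      exact ⟨ne_of_gt hy1, hball hy2⟩
    have hle : volume (ball p0 R) ≤ volume ({y : Ev n | 0 < K y} ∩ ball p0 R) := by
      calc volume (ball p0 R)
          ≤ volume (({y : Ev n | 0 < K y} ∩ ball p0 R) ∪ {y : Ev n | ¬ 0 < K y}) := by
            refine measure_mono fun y hy => ?_
            by_cases h : 0 < K y
            · exact Or.inl ⟨h, hy⟩
            · exact Or.inr h
        _ ≤ volume ({y : Ev n | 0 < K y} ∩ ball p0 R) + volume {y : Ev n | ¬ 0 < K y} :=
            measure_union_le _ _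
        _ = volume ({y : Ev n | 0 < K y} ∩ ball p0 R) := by rw [hnull, add_zero]
    calc (0 : ℝ≥0∞) < volume (ball p0 R) := measure_ball_pos _ _ hR
      _ ≤ volume ({y : Ev n | 0 < K y} ∩ ball p0 R) := hle
      _ ≤ volume (Function.support K ∩ B₂ᶜ) := measure_mono hsub
  -- constants
  set M : ℝ := Mg + IK⁻¹ * Nf + ε with hM_def
  have hinv0 : 0 ≤ IK⁻¹ * Nf := mul_nonneg (inv_nonneg.2 hIKpos.le) hNf0
  have hM0 : 0 ≤ M := by rw [hM_def]; linarith
  have hMgM : Mg ≤ M := by rw [hM_def]; linarith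
  set Cf : ℝ := IK⁻¹ * Nf + ε with hCf_def
  have hCf0 : 0 < Cf := by rw [hCf_def]; linarith
  have hMCf : M = Mg + Cf := by rw [hM_def, hCf_def]; ring
  -- the test function
  set w0 : Ev n → ℝ := fun x => max (u x - M) 0 with hw0_def
  set w : Ev n → ℝ := fun x => Ω.indicator w0 x with hw_def
  have hw0m : Measurable w0 := (hum.sub measurable_const).max measurable_const
  have hwm : Measurable w := hw0m.indicator hΩo.measurableSet
  have hw0 : ∀ x, 0 ≤ w x := fun x =>
    indicator_nonneg (fun y _ => le_max_right _ _) x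
  have hwnot : ∀ x, x ∉ Ω → w x = 0 := fun x hx => indicator_of_notMem hx _
  have hwmem : ∀ x, x ∈ Ω → w x = w0 x := fun x hx => indicator_of_mem hx _
  -- good a.e. facts
  have hgb : ∀ᵐ x : Ev n, x ∉ Ω → |g x| ≤ Mg := by
    have h1 := abs_le_toReal_of_memLpTop hg'
    rw [ae_restrict_iff' hΩo.measurableSet.compl] at h1
    filter_upwards [h1] with x hx hxo using hx hxo
  have hGae : ∀ᵐ x : Ev n, x ∉ Ω → u x ≤ Mg := by
    filter_upwards [hgb, hug] with x h1 h2 hx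
    rw [h2 hx]; exact (abs_le.1 (h1 hx)).2
  haveI hfin : IsFiniteMeasure (volume.restrict Ω) := ⟨by
    rw [Measure.restrict_apply_univ]
    exact lt_of_le_of_lt (measure_mono hΩR) measure_ball_lt_top⟩
  -- w ∈ L²
  have hwL2 : MemLp w 2 volume := by
    have h1 : MemLp (Ω.indicator u) 2 volume :=
      (memLp_indicator_iff_restrict hΩo.measurableSet).2 huL2
    refine h1.of_le hwm.aestronglyMeasurable (ae_of_all _ fun x => ?_)
    by_cases hx : x ∈ Ω
    · rw [hwmem x hx, indicator_of_mem hx]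
      simpa [Real.norm_eq_abs, hw0_def] using aux_absmax (u x) M hM0
    · rw [hwnot x hx, indicator_of_notMem hx]
  -- energy of w
  have hcrossm : MeasurableSet (crossRegion Ω) :=
    ((hΩo.preimage continuous_fst).union (hΩo.preimage continuous_snd)).measurableSet
  have hwEle : energyE K Ω w ≤ energyE K Ω u := by
    unfold energyE
    refine setLIntegral_mono_ae
      (((((hum.comp measurable_fst).sub (hum.comp measurable_snd)).pow_const 2).mul
          (hKm.comp (measurable_fst.sub measurable_snd))).ennreal_ofReal.aemeasurable) ?_
    filter_upwards [ae_prod_of_ae hGae] with p hp _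
    apply ENNReal.ofReal_le_ofReal
    refine mul_le_mul_of_nonneg_right ?_ (hK0 _)
    have e1 : w p.1 = w0 p.1 := by
      by_cases h : p.1 ∈ Ω
      · exact hwmem _ h
      · rw [hwnot _ h]
        have h4 := hp.1 h
        symm
        show max (u p.1 - M) 0 = 0
        exact max_eq_right (by linarith)
    have e2 : w p.2 = w0 p.2 := by
      by_cases h : p.2 ∈ Ω
      · exact hwmem _ h
      · rw [hwnot _ h]
        have h4 := hp.2 h
        symm
        show max (u p.2 - M) 0 = 0
        exact max_eq_right (by linarith)
    simp only [e1, e2, hw0_def]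
    have h3 : |max (u p.1 - M) 0 - max (u p.2 - M) 0| ≤ |u p.1 - u p.2| := by
      have := abs_max_sub_max_le_abs (u p.1 - M) (u p.2 - M) 0
      simpa [sub_sub_sub_cancel_right] using this
    calc (max (u p.1 - M) 0 - max (u p.2 - M) 0) ^ 2
        = |max (u p.1 - M) 0 - max (u p.2 - M) 0| ^ 2 := (sq_abs _).symm
      _ ≤ |u p.1 - u p.2| ^ 2 := pow_le_pow_left₀ (abs_nonneg _) h3 2
      _ = (u p.1 - u p.2) ^ 2 := sq_abs _
  have hwE : energyE K Ω w < ⊤ := lt_of_le_of_lt hwEle huE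
  have hwtest : IsTestFn K Ω w := ⟨hwm, hwL2, ae_of_all _ hwnot, hwE⟩
  have hid := huw w hwtest
  -- integrability of w
  have hwInt : Integrable w volume := by
    rw [hw_def]
    have : Integrable (Ω.indicator w0) volume := by
      rw [integrable_indicator_iff hΩo.measurableSet]
      have h1 : MemLp w0 2 (volume.restrict Ω) :=
        huL2.of_le hw0m.aestronglyMeasurable (ae_of_all _ fun x => by
          simpa [Real.norm_eq_abs, hw0_def] using aux_absmax (u x) M hM0)
      exact memLp_one_iff_integrable.1 (h1.mono_exponent (by norm_num))
    exact this
  set S : ℝ := ∫ x, w x with hS_def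
  have hS0 : 0 ≤ S := integral_nonneg hw0
  have hSΩ : ∫ x in Ω, w x = S := by
    have h1 : S = ∫ x in Ω, w0 x := by
      rw [hS_def]
      conv_lhs => rw [hw_def]
      exact integral_indicator hΩo.measurableSet
    rw [h1]
    exact setIntegral_congr_fun hΩo.measurableSet fun x hx => hwmem x hx
  -- RHS bound
  have hfb := abs_le_toReal_of_memLpTop hf
  have hNfw : Integrable (fun x => Nf * w x) (volume.restrict Ω) :=
    (hwInt.restrict (s := Ω)).const_mul Nf
  have hfw : Integrable (fun x => f x * w x) (volume.restrict Ω) := by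
    refine hNfw.mono' (hf.aestronglyMeasurable.mul hwm.aestronglyMeasurable) ?_
    filter_upwards [hfb] with x hx
    rw [Real.norm_eq_abs, abs_mul, abs_of_nonneg (hw0 x)]
    exact mul_le_mul_of_nonneg_right hx (hw0 x)
  have hRHS : ∫ x in Ω, f x * w x ≤ Nf * S := by
    calc ∫ x in Ω, f x * w x ≤ ∫ x in Ω, Nf * w x := by
          refine integral_mono_ae hfw hNfw ?_
          filter_upwards [hfb] with x hx
          exact mul_le_mul_of_nonneg_right (le_trans (le_abs_self _) hx) (hw0 x)
      _ = Nf * ∫ x in Ω, w x := integral_const_mul Nf _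
      _ = Nf * S := by rw [hSΩ]
  -- F and integrability
  set F : Ev n × Ev n → ℝ :=
    fun p => (u p.1 - u p.2) * (w p.1 - w p.2) * K (p.1 - p.2) with hF_def
  have hFm : Measurable F :=
    (((hum.comp measurable_fst).sub (hum.comp measurable_snd)).mul
      ((hwm.comp measurable_fst).sub (hwm.comp measurable_snd))).mul
      (hKm.comp (measurable_fst.sub measurable_snd))
  set X : Ev n × Ev n → ℝ := fun p => (u p.1 - u p.2)^2 * K (p.1 - p.2) with hX_def
  set Y : Ev n × Ev n → ℝ := fun p => (w p.1 - w p.2)^2 * K (p.1 - p.2) with hY_def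
  have hXm : Measurable X :=
    (((hum.comp measurable_fst).sub (hum.comp measurable_snd)).pow_const 2).mul
      (hKm.comp (measurable_fst.sub measurable_snd))
  have hYm : Measurable Y :=
    (((hwm.comp measurable_fst).sub (hwm.comp measurable_snd)).pow_const 2).mul
      (hKm.comp (measurable_fst.sub measurable_snd))
  have hX0 : ∀ p, 0 ≤ X p := fun p => mul_nonneg (sq_nonneg _) (hK0 _)
  have hY0 : ∀ p, 0 ≤ Y p := fun p => mul_nonneg (sq_nonneg _) (hK0 _)
  have hEu : energyE K Ω u = ∫⁻ p in crossRegion Ω, ENNReal.ofReal (X p) := rfl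
  have hEw : energyE K Ω w = ∫⁻ p in crossRegion Ω, ENNReal.ofReal (Y p) := rfl
  have hGbInt : Integrable (fun p => (1/2 : ℝ) * (X p + Y p))
      (volume.restrict (crossRegion Ω)) := by
    refine ⟨(((hXm.add hYm).const_mul _).aestronglyMeasurable), ?_⟩
    rw [hasFiniteIntegral_iff_ofReal (ae_of_all _ fun p => by
      have := hX0 p; have := hY0 p; positivity)]
    have heq : ∀ p : Ev n × Ev n, ENNReal.ofReal ((1/2 : ℝ) * (X p + Y p))
        = ENNReal.ofReal (1/2 : ℝ) * (ENNReal.ofReal (X p) + ENNReal.ofReal (Y p)) :=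
      fun p => by
        rw [ENNReal.ofReal_mul (by norm_num), ENNReal.ofReal_add (hX0 p) (hY0 p)]
    calc ∫⁻ p in crossRegion Ω, ENNReal.ofReal ((1/2 : ℝ) * (X p + Y p))
        = ∫⁻ p in crossRegion Ω,
            ENNReal.ofReal (1/2 : ℝ) * (ENNReal.ofReal (X p) + ENNReal.ofReal (Y p)) := by
          exact lintegral_congr heq
      _ = ENNReal.ofReal (1/2 : ℝ) *
            ∫⁻ p in crossRegion Ω, (ENNReal.ofReal (X p) + ENNReal.ofReal (Y p)) :=
          lintegral_const_mul _ ((hXm.ennreal_ofReal).add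
            (hYm.ennreal_ofReal))
      _ = ENNReal.ofReal (1/2 : ℝ) * (energyE K Ω u + energyE K Ω w) := by
          rw [lintegral_add_left (hXm.ennreal_ofReal), hEu, hEw]
      _ < ⊤ := ENNReal.mul_lt_top ENNReal.ofReal_lt_top (ENNReal.add_lt_top.2 ⟨huE, hwE⟩)
  have hFInt : Integrable F (volume.restrict (crossRegion Ω)) := by
    refine hGbInt.mono' hFm.aestronglyMeasurable (ae_of_all _ fun p => ?_)
    simp only [hF_def, hX_def, hY_def, Real.norm_eq_abs]
    have hk := hK0 (p.1 - p.2)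
    have habs : |(u p.1 - u p.2) * (w p.1 - w p.2) * K (p.1 - p.2)|
        = |(u p.1 - u p.2) * (w p.1 - w p.2)| * K (p.1 - p.2) := by
      rw [abs_mul, abs_of_nonneg hk]
    rw [habs]
    have h2 : |(u p.1 - u p.2) * (w p.1 - w p.2)|
        ≤ (1/2 : ℝ) * ((u p.1 - u p.2)^2 + (w p.1 - w p.2)^2) := by
      rw [abs_mul]
      nlinarith [sq_nonneg (|u p.1 - u p.2| - |w p.1 - w p.2|), sq_abs (u p.1 - u p.2),
        sq_abs (w p.1 - w p.2), abs_nonneg (u p.1 - u p.2), abs_nonneg (w p.1 - w p.2)]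
    nlinarith [mul_le_mul_of_nonneg_right h2 hk]
  -- lintegral minorant
  set κ : Ev n → ℝ≥0∞ := fun y => ENNReal.ofReal (K y) with hκ_def
  have hκm : Measurable κ := hKm.ennreal_ofReal
  have hκim : Measurable (B₂ᶜ.indicator κ) := hκm.indicator hB₂m
  set T1 : Ev n × Ev n → ℝ≥0∞ :=
    fun p => ENNReal.ofReal (w p.1) * (B₂ᶜ.indicator κ (p.1 - p.2)) with hT1_def
  set T2 : Ev n × Ev n → ℝ≥0∞ :=
    fun p => ENNReal.ofReal (w p.2) * (B₂ᶜ.indicator κ (p.2 - p.1)) with hT2_def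
  have hT1m : Measurable T1 :=
    ((hwm.comp measurable_fst).ennreal_ofReal).mul
      (hκim.comp (measurable_fst.sub measurable_snd))
  have hT2m : Measurable T2 :=
    ((hwm.comp measurable_snd).ennreal_ofReal).mul
      (hκim.comp (measurable_snd.sub measurable_fst))
  -- key pointwise estimate
  have hkey : ∀ᵐ p : Ev n × Ev n, p ∈ crossRegion Ω →
      (0 ≤ F p ∧ ENNReal.ofReal Cf * (T1 p + T2 p) ≤ ENNReal.ofReal (F p)) := by
    filter_upwards [ae_prod_of_ae hGae] with p hp hcross
    obtain ⟨h1, h2⟩ := hp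
    have hk := hK0 (p.1 - p.2)
    have hksym : K (p.2 - p.1) = K (p.1 - p.2) := by
      rw [← hKsym (p.1 - p.2), neg_sub]
    by_cases hx : p.1 ∈ Ω <;> by_cases hz : p.2 ∈ Ω
    · -- both in Ω
      have e1 := mem_ball_zero_iff.1 (hΩR hx)
      have e2 := mem_ball_zero_iff.1 (hΩR hz)
      have hball : p.1 - p.2 ∈ B₂ := by
        rw [hB₂, mem_ball_zero_iff]
        calc ‖p.1 - p.2‖ ≤ ‖p.1‖ + ‖p.2‖ := norm_sub_le _ _
          _ < 2 * R := by linarith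
      have hball2 : p.2 - p.1 ∈ B₂ := by
        rw [hB₂, mem_ball_zero_iff, norm_sub_rev]
        rw [hB₂, mem_ball_zero_iff] at hball
        exact hball
      have hT1z : T1 p = 0 := by
        simp only [hT1_def]
        rw [indicator_of_notMem (by simpa using hball), mul_zero]
      have hT2z : T2 p = 0 := by
        simp only [hT2_def]
        rw [indicator_of_notMem (by simpa using hball2), mul_zero]
      constructor
      · simp only [hF_def]
        rw [hwmem _ hx, hwmem _ hz]
        simp only [hw0_def]
        exact mul_nonneg (aux_mono (u p.1) (u p.2) M) hk
      · rw [hT1z, hT2z, add_zero, mul_zero]; exact zero_le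
    · -- p.1 ∈ Ω, p.2 ∉ Ω
      have hwz : w p.2 = 0 := hwnot _ hz
      have hb : u p.2 ≤ Mg := h2 hz
      have hT2z : T2 p = 0 := by
        simp only [hT2_def]; rw [hwz]; simp
      have hwx0 : 0 ≤ w p.1 := hw0 _
      have hFval : F p = (u p.1 - u p.2) * w p.1 * K (p.1 - p.2) := by
        simp only [hF_def]; rw [hwz, sub_zero]
      have hFpos : 0 ≤ F p := by
        rcases eq_or_lt_of_le hwx0 with hw1 | hw1
        · rw [hFval, ← hw1]; ring_nf; simp
        · have hxM : M < u p.1 := by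
            have h6 := hwmem _ hx
            rw [h6] at hw1
            simp only [hw0_def] at hw1
            by_contra hcon
            push_neg at hcon
            rw [max_eq_right (by linarith : u p.1 - M ≤ 0)] at hw1
            exact lt_irrefl _ hw1
          rw [hFval]
          have : 0 ≤ u p.1 - u p.2 := by linarith
          positivity
      refine ⟨hFpos, ?_⟩
      rw [hT2z, add_zero]
      by_cases hind : p.1 - p.2 ∈ B₂ᶜ
      · simp only [hT1_def]
        rw [indicator_of_mem hind]
        simp only [hκ_def]
        rw [← ENNReal.ofReal_mul (hw0 _), ← ENNReal.ofReal_mul hCf0.le]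
        apply ENNReal.ofReal_le_ofReal
        rcases eq_or_lt_of_le hwx0 with hw1 | hw1
        · rw [hFval, ← hw1]; ring_nf; exact le_of_eq rfl
        · have hxM : M < u p.1 := by
            have h6 := hwmem _ hx
            rw [h6] at hw1
            simp only [hw0_def] at hw1
            by_contra hcon
            push_neg at hcon
            rw [max_eq_right (by linarith : u p.1 - M ≤ 0)] at hw1
            exact lt_irrefl _ hw1
          have hab : Cf ≤ u p.1 - u p.2 := by rw [hMCf] at hxM; linarith
          rw [hFval]
          have h5 : Cf * w p.1 ≤ (u p.1 - u p.2) * w p.1 :=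
            mul_le_mul_of_nonneg_right hab hwx0
          calc Cf * (w p.1 * K (p.1 - p.2)) = Cf * w p.1 * K (p.1 - p.2) := by ring
            _ ≤ (u p.1 - u p.2) * w p.1 * K (p.1 - p.2) :=
              mul_le_mul_of_nonneg_right h5 hk
      · simp only [hT1_def]
        rw [indicator_of_notMem hind, mul_zero, mul_zero]
        exact zero_le
    · -- p.1 ∉ Ω, p.2 ∈ Ω
      have hwx : w p.1 = 0 := hwnot _ hx
      have hb : u p.1 ≤ Mg := h1 hx
      have hT1z : T1 p = 0 := by
        simp only [hT1_def]; rw [hwx]; simp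
      have hwz0 : 0 ≤ w p.2 := hw0 _
      have hFval : F p = (u p.2 - u p.1) * w p.2 * K (p.1 - p.2) := by
        simp only [hF_def]; rw [hwx]; ring
      have hFpos : 0 ≤ F p := by
        rcases eq_or_lt_of_le hwz0 with hw1 | hw1
        · rw [hFval, ← hw1]; ring_nf; simp
        · have hzM : M < u p.2 := by
            have h6 := hwmem _ hz
            rw [h6] at hw1
            simp only [hw0_def] at hw1
            by_contra hcon
            push_neg at hcon
            rw [max_eq_right (by linarith : u p.2 - M ≤ 0)] at hw1
            exact lt_irrefl _ hw1
          rw [hFval]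
          have : 0 ≤ u p.2 - u p.1 := by linarith
          positivity
      refine ⟨hFpos, ?_⟩
      rw [hT1z, zero_add]
      by_cases hind : p.2 - p.1 ∈ B₂ᶜ
      · simp only [hT2_def]
        rw [indicator_of_mem hind]
        simp only [hκ_def]
        rw [← ENNReal.ofReal_mul (hw0 _), ← ENNReal.ofReal_mul hCf0.le]
        apply ENNReal.ofReal_le_ofReal
        rcases eq_or_lt_of_le hwz0 with hw1 | hw1
        · rw [hFval, ← hw1]; ring_nf; exact le_of_eq rfl
        · have hzM : M < u p.2 := by
            have h6 := hwmem _ hz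
            rw [h6] at hw1
            simp only [hw0_def] at hw1
            by_contra hcon
            push_neg at hcon
            rw [max_eq_right (by linarith : u p.2 - M ≤ 0)] at hw1
            exact lt_irrefl _ hw1
          have hab : Cf ≤ u p.2 - u p.1 := by rw [hMCf] at hzM; linarith
          rw [hFval]
          have h5 : Cf * w p.2 ≤ (u p.2 - u p.1) * w p.2 :=
            mul_le_mul_of_nonneg_right hab hwz0
          calc Cf * (w p.2 * K (p.2 - p.1)) = Cf * w p.2 * K (p.2 - p.1) := by ring
            _ ≤ (u p.2 - u p.1) * w p.2 * K (p.2 - p.1) :=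
              mul_le_mul_of_nonneg_right h5 (by rw [hksym]; exact hk)
            _ = (u p.2 - u p.1) * w p.2 * K (p.1 - p.2) := by rw [hksym]
      · simp only [hT2_def]
        rw [indicator_of_notMem hind, mul_zero, mul_zero]
        exact zero_le
    · exact absurd hcross (by simp [crossRegion, hx, hz])
  -- relate Bochner integral of F to lintegral
  have hFae0 : 0 ≤ᵐ[volume.restrict (crossRegion Ω)] F := by
    have h5 : ∀ᵐ p ∂(volume.restrict (crossRegion Ω)), 0 ≤ F p := by
      rw [ae_restrict_iff' hcrossm]
      filter_upwards [hkey] with p hp hc using (hp hc).1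
    exact h5
  have hAeq : ENNReal.ofReal (∫ p in crossRegion Ω, F p)
      = ∫⁻ p in crossRegion Ω, ENNReal.ofReal (F p) :=
    ofReal_integral_eq_lintegral_ofReal hFInt hFae0
  have hlow : ∫⁻ p in crossRegion Ω, ENNReal.ofReal Cf * (T1 p + T2 p)
      ≤ ∫⁻ p in crossRegion Ω, ENNReal.ofReal (F p) := by
    refine setLIntegral_mono_ae ((hFm.ennreal_ofReal).aemeasurable) ?_
    filter_upwards [hkey] with p hp hc using (hp hc).2
  -- extend minorant lintegral to all of space
  have hLHS : ∫⁻ p in crossRegion Ω, ENNReal.ofReal Cf * (T1 p + T2 p)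
      = ENNReal.ofReal Cf * ((∫⁻ p : Ev n × Ev n, T1 p) + ∫⁻ p : Ev n × Ev n, T2 p) := by
    rw [← lintegral_indicator hcrossm]
    have hind : (crossRegion Ω).indicator (fun p => ENNReal.ofReal Cf * (T1 p + T2 p))
        = fun p => ENNReal.ofReal Cf * (T1 p + T2 p) := by
      rw [indicator_eq_self]
      intro p hp
      by_contra hpc
      apply hp
      have hx : p.1 ∉ Ω ∧ p.2 ∉ Ω := by
        have : ¬ (p.1 ∈ Ω ∨ p.2 ∈ Ω) := hpc
        tauto
      show ENNReal.ofReal Cf * (T1 p + T2 p) = 0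
      simp only [hT1_def, hT2_def]
      rw [hwnot _ hx.1, hwnot _ hx.2]
      simp
    rw [hind, lintegral_const_mul (f := fun p => T1 p + T2 p) _ (hT1m.add hT2m), lintegral_add_left hT1m]
  -- T2 integrates to the same as T1 by symmetry
  have hT2T1 : (∫⁻ p : Ev n × Ev n, T2 p) = ∫⁻ p : Ev n × Ev n, T1 p := by
    have hswap : ∀ p : Ev n × Ev n, T2 p = T1 p.swap := fun p => rfl
    rw [Measure.volume_eq_prod]
    calc (∫⁻ p : Ev n × Ev n, T2 p ∂((volume : Measure (Ev n)).prod volume))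
        = ∫⁻ p : Ev n × Ev n, T1 p.swap ∂((volume : Measure (Ev n)).prod volume) :=
          lintegral_congr hswap
      _ = ∫⁻ p : Ev n × Ev n, T1 p ∂((volume : Measure (Ev n)).prod volume) :=
          lintegral_prod_swap T1
  -- Tonelli for T1
  have hW : (∫⁻ x : Ev n, ENNReal.ofReal (w x)) = ENNReal.ofReal S := by
    rw [hS_def]
    exact (ofReal_integral_eq_lintegral_ofReal hwInt (ae_of_all _ hw0)).symm
  have hIKl : (∫⁻ y in B₂ᶜ, κ y) = ENNReal.ofReal IK := by
    rw [hIK_def, hκ_def]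
    exact (ofReal_integral_eq_lintegral_ofReal hKintB (ae_of_all _ hK0)).symm
  have hT1int : (∫⁻ p : Ev n × Ev n, T1 p) = ENNReal.ofReal S * ENNReal.ofReal IK := by
    rw [Measure.volume_eq_prod, lintegral_prod _ hT1m.aemeasurable]
    have hinner : ∀ x : Ev n, (∫⁻ z : Ev n, B₂ᶜ.indicator κ (x - z)) = ENNReal.ofReal IK := by
      intro x
      rw [(Measure.measurePreserving_sub_left volume x).lintegral_comp hκim]
      rw [lintegral_indicator hB₂m]
      exact hIKl
    calc (∫⁻ x : Ev n, ∫⁻ z : Ev n, T1 (x, z))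
        = ∫⁻ x : Ev n, ENNReal.ofReal (w x) * ∫⁻ z : Ev n, B₂ᶜ.indicator κ (x - z) := by
          refine lintegral_congr fun x => ?_
          simp only [hT1_def]
          exact lintegral_const_mul (ENNReal.ofReal (w x))
            (f := fun z : Ev n => B₂ᶜ.indicator κ (x - z))
            (hκim.comp (measurable_const.sub measurable_id))
      _ = ∫⁻ x : Ev n, ENNReal.ofReal (w x) * ENNReal.ofReal IK := by
          refine lintegral_congr fun x => ?_
          rw [hinner x]
      _ = (∫⁻ x : Ev n, ENNReal.ofReal (w x)) * ENNReal.ofReal IK :=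
          lintegral_mul_const _ (hwm.ennreal_ofReal)
      _ = ENNReal.ofReal S * ENNReal.ofReal IK := by rw [hW]
  -- combine everything
  have hA0 : 0 ≤ ∫ p in crossRegion Ω, F p := integral_nonneg_of_ae hFae0
  have hchain : ENNReal.ofReal (Cf * (2 * (S * IK)))
      ≤ ENNReal.ofReal (∫ p in crossRegion Ω, F p) := by
    rw [hAeq]
    refine le_trans (le_of_eq ?_) (le_trans (le_of_eq hLHS.symm) hlow)
    rw [hT2T1, hT1int]
    rw [ENNReal.ofReal_mul hCf0.le, ENNReal.ofReal_mul (by norm_num : (0:ℝ) ≤ 2),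
      ENNReal.ofReal_mul hS0, ENNReal.ofReal_ofNat]
    ring
  have hreal : Cf * (2 * (S * IK)) ≤ ∫ p in crossRegion Ω, F p :=
    (ENNReal.ofReal_le_ofReal_iff hA0).1 hchain
  have hup : (∫ p in crossRegion Ω, F p) ≤ 2 * (Nf * S) := by
    have h6 : (1/2 : ℝ) * ∫ p in crossRegion Ω, F p = ∫ x in Ω, f x * w x := hid
    linarith [hRHS]
  have hCfIK : Cf * IK = Nf + ε * IK := by
    rw [hCf_def]
    field_simp
  have hSzero : S = 0 := by
    have h7 : Cf * (2 * (S * IK)) ≤ 2 * (Nf * S) := le_trans hreal hup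
    have h8 : Cf * (2 * (S * IK)) = 2 * S * Nf + 2 * S * (ε * IK) := by
      have h9 : Cf * (2 * (S * IK)) = 2 * S * (Cf * IK) := by ring
      rw [h9, hCfIK]; ring
    have h10 : 2 * S * (ε * IK) ≤ 0 := by linarith
    have h11 : 0 < ε * IK := mul_pos hε hIKpos
    have hSle : S ≤ 0 := by nlinarith [h10, h11]
    exact le_antisymm hSle hS0
  have hwzero : ∀ᵐ x : Ev n, w x = 0 := by
    have h8 := (integral_eq_zero_iff_of_nonneg hw0 hwInt).1 (by rw [← hS_def]; exact hSzero)
    exact h8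
  filter_upwards [hwzero] with x hx hxΩ
  have h9 : max (u x - M) 0 = 0 := by
    have h11 := hwmem x hxΩ
    rw [h11] at hx
    simpa [hw0_def] using hx
  have h10 : u x - M ≤ 0 := by
    by_contra hcon
    push_neg at hcon
    rw [max_eq_left hcon.le] at h9
    linarith
  linarith

lemma neg_sol {n : ℕ} (K : Ev n → ℝ) (Ω : Set (Ev n)) (f g u : Ev n → ℝ)
    (hu : IsEnergyWeakSol K Ω f g u) :
    IsEnergyWeakSol K Ω (fun x => -f x) (fun x => -g x) (fun x => -u x) := by
  obtain ⟨hum, huL2, hug, huE, huw⟩ := hu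
  refine ⟨hum.neg, huL2.neg, ?_, ?_, ?_⟩
  · filter_upwards [hug] with x hx hxo
    rw [hx hxo]
  · have h0 : energyE K Ω (fun x => -u x) = energyE K Ω u := by
      unfold energyE
      refine lintegral_congr fun p => ?_
      congr 1
      ring
    rw [h0]; exact huE
  · intro φ hφ
    have h1 := huw φ hφ
    have h2 : (∫ p in crossRegion Ω,
          ((fun x => -u x) p.1 - (fun x => -u x) p.2) * (φ p.1 - φ p.2) * K (p.1 - p.2))
        = - ∫ p in crossRegion Ω, (u p.1 - u p.2) * (φ p.1 - φ p.2) * K (p.1 - p.2) := by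
      rw [← integral_neg]
      refine integral_congr_ae (ae_of_all _ fun p => ?_)
      ring
    have h3 : (∫ x in Ω, (fun x => -f x) x * φ x) = - ∫ x in Ω, f x * φ x := by
      rw [← integral_neg]
      refine integral_congr_ae (ae_of_all _ fun x => ?_)
      ring
    rw [h2, h3, ← h1]
    ring

/-- `L^∞` bound.  If `Ω ⊆ B_R` and `C = (∫_{ℝⁿ∖B_{2R}} K)⁻¹`, then every
energy weak solution of `Lu = f` in `Ω`, `u = g` outside, with `f ∈ L^∞(Ω)` and
`g ∈ L^∞(ℝⁿ∖Ω)`, satisfies `|u| ≤ ‖g‖_{L^∞(ℝⁿ∖Ω)} + C ‖f‖_{L^∞(Ω)}` a.e. in `Ω`. -/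
theorem statement7 {n : ℕ} (hn : 1 ≤ n) (K : Ev n → ℝ) (hK : IsLevyKernel K)
    (hKpos : ∀ᵐ y : Ev n, 0 < K y)
    (Ω : Set (Ev n)) (hΩo : IsOpen Ω) (R : ℝ) (hR : 0 < R) (hΩR : Ω ⊆ ball (0 : Ev n) R)
    (f g u : Ev n → ℝ) (hf : MemLp f ⊤ (volume.restrict Ω)) (hg : Measurable g)
    (hg' : MemLp g ⊤ (volume.restrict Ωᶜ))
    (hu : IsEnergyWeakSol K Ω f g u) :
    ∀ᵐ x : Ev n, x ∈ Ω →
      |u x| ≤ (eLpNorm g ⊤ (volume.restrict Ωᶜ)).toReal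
        + (∫ y in (ball (0 : Ev n) (2 * R))ᶜ, K y)⁻¹ *
            (eLpNorm f ⊤ (volume.restrict Ω)).toReal := by
  set B : ℝ := (eLpNorm g ⊤ (volume.restrict Ωᶜ)).toReal
    + (∫ y in (ball (0 : Ev n) (2 * R))ᶜ, K y)⁻¹ *
        (eLpNorm f ⊤ (volume.restrict Ω)).toReal with hB_def
  have h1 : ∀ k : ℕ, ∀ᵐ x : Ev n, x ∈ Ω → u x ≤ B + 1/(k+1) := by
    intro k
    have := oneSided hn K hK hKpos Ω hΩo R hR hΩR f g u hf hg hg' hu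
      (1/(k+1)) (by positivity)
    filter_upwards [this] with x hx hxΩ
    have h2 := hx hxΩ
    rw [hB_def]
    linarith
  have hu' := neg_sol K Ω f g u hu
  have hgeq : eLpNorm (fun x => -g x) ⊤ (volume.restrict Ωᶜ) = eLpNorm g ⊤ (volume.restrict Ωᶜ) := by
    have h0 : (fun x : Ev n => -g x) = -g := rfl
    rw [h0, eLpNorm_neg]
  have hfeq : eLpNorm (fun x => -f x) ⊤ (volume.restrict Ω) = eLpNorm f ⊤ (volume.restrict Ω) := by
    have h0 : (fun x : Ev n => -f x) = -f := rfl
    rw [h0, eLpNorm_neg]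
  have h1' : ∀ k : ℕ, ∀ᵐ x : Ev n, x ∈ Ω → -u x ≤ B + 1/(k+1) := by
    intro k
    have := oneSided hn K hK hKpos Ω hΩo R hR hΩR (fun x => -f x) (fun x => -g x)
      (fun x => -u x) (by rw [show (fun x : Ev n => -f x) = -f from rfl]; exact hf.neg)
      hg.neg (by rw [show (fun x : Ev n => -g x) = -g from rfl]; exact hg'.neg) hu'
      (1/(k+1)) (by positivity)
    filter_upwards [this] with x hx hxΩ
    have h2 := hx hxΩ
    rw [hgeq, hfeq] at h2
    rw [hB_def]
    linarith
  have h2 := ae_all_iff.2 h1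
  have h2' := ae_all_iff.2 h1'
  filter_upwards [h2, h2'] with x hx hx' hxΩ
  rw [abs_le]
  constructor
  · have hle : ∀ δ : ℝ, 0 < δ → -u x ≤ B + δ := by
      intro δ hδ
      obtain ⟨k, hk⟩ := exists_nat_one_div_lt hδ
      exact le_trans (hx' k hxΩ) (by linarith)
    linarith [le_of_forall_pos_le_add hle]
  · refine le_of_forall_pos_le_add fun δ hδ => ?_
    obtain ⟨k, hk⟩ := exists_nat_one_div_lt hδ
    exact le_trans (hx k hxΩ) (by linarith)
end
end
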